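/- Let H be a bipartite graph on [n] with m edges, let p ∈ (0,1], and let U be a random subset of [n] in which each vertex is included independently with probability p. Let X be the number of edges of H with both endpoints in U (the number of edges of the induced subgraph H[U]), and let Z be the indicator random variable of the event |U| ≤ 5pn. Then E[exp(ZX/(5pn))] ≤ exp(pm/n). -/

import Mathlib

open Finset

section Helpers
variable {n : ℕ}

lemma expand_lemma {V : Type*} [DecidableEq V] (p : ℝ) (W : Finset V) (g : V → ℝ) :
    ∑ T ∈ W.powerset, p ^ T.card * (1 - p) ^ (W.card - T.card) * ∏ v ∈ T, g v
      = ∏ v ∈ W, (1 - p + p * g v) := by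
  have := Finset.prod_add (fun v => p * g v) (fun _ => (1 - p)) W
  have h2 : ∀ v ∈ W, p * g v + (1 - p) = 1 - p + p * g v := fun v _ => by ring
  rw [Finset.prod_congr rfl h2] at this
  rw [this]
  refine Finset.sum_congr rfl fun T hT => ?_
  rw [Finset.mem_powerset] at hT
  rw [Finset.prod_mul_distrib, Finset.prod_const, Finset.prod_const,
    Finset.card_sdiff_of_subset hT]
  ring

lemma exp_le_affine {x : ℝ} (h0 : 0 ≤ x) (h1 : x ≤ 1) :
    Real.exp x ≤ 1 + (Real.exp 1 - 1) * x := by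
  have := convexOn_exp.2 (Set.mem_univ (0:ℝ)) (Set.mem_univ (1:ℝ))
    (by linarith : (0:ℝ) ≤ 1 - x) h0 (by ring)
  simp only [smul_eq_mul, mul_zero, mul_one, zero_add, Real.exp_zero] at this
  calc Real.exp x ≤ 1 - x + x * Real.exp 1 := this
    _ = 1 + (Real.exp 1 - 1) * x := by ring

lemma count1 (H : SimpleGraph (Fin n)) [DecidableRel H.Adj] (c : H.Coloring (Fin 2))
    (S T : Finset (Fin n)) (hS : ∀ v ∈ S, c v = 0) (hT : ∀ v ∈ T, c v ≠ 0) :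
    (H.edgeFinset.filter (fun e => ∀ v ∈ e, v ∈ S ∪ T)).card
      ≤ ∑ b ∈ T, (S.filter (H.Adj b)).card := by
  classical
  rw [← Finset.card_sigma]
  apply Finset.card_le_card_of_surjOn (fun q => s(q.1, q.2))
  intro e he
  simp only [Finset.coe_filter, Set.mem_setOf_eq, SimpleGraph.mem_edgeFinset,
    SimpleGraph.mem_edgeSet] at he
  induction e with
  | _ x y =>
    obtain ⟨hadj, hmem⟩ := he
    have hx : x ∈ S ∪ T := hmem x (by simp)
    have hy : y ∈ S ∪ T := hmem y (by simp)
    have hcxy : c x ≠ c y := c.valid hadj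
    rw [Finset.mem_union] at hx hy
    by_cases hcx : c x = 0
    · have hxS : x ∈ S := hx.resolve_right fun h => hT x h hcx
      have hyT : y ∈ T := hy.resolve_left fun h => hcxy (by rw [hcx, hS y h])
      refine ⟨⟨y, x⟩, ?_, ?_⟩
      · simp only [Finset.coe_sigma, Set.mem_sigma_iff, Finset.mem_coe, Finset.mem_filter]
        exact ⟨hyT, hxS, hadj.symm⟩
      · exact Sym2.eq_swap
    · have hxT : x ∈ T := hx.resolve_left fun h => hcx (hS x h)
      have hcy : c y = 0 := by
        have := c.valid hadj
        omega
      have hyS : y ∈ S := hy.resolve_right fun h => hT y h hcy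
      refine ⟨⟨x, y⟩, ?_, rfl⟩
      simp only [Finset.coe_sigma, Set.mem_sigma_iff, Finset.mem_coe, Finset.mem_filter]
      exact ⟨hxT, hyS, hadj⟩

lemma count2 (H : SimpleGraph (Fin n)) [DecidableRel H.Adj] (S B : Finset (Fin n)) :
    ∑ b ∈ B, (S.filter (H.Adj b)).card = ∑ a ∈ S, (B.filter (fun b => H.Adj a b)).card := by
  simp only [Finset.card_filter]
  rw [Finset.sum_comm]
  exact Finset.sum_congr rfl fun a _ => Finset.sum_congr rfl fun b _ => by
    simp only [SimpleGraph.adj_comm]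

lemma count3 (H : SimpleGraph (Fin n)) [DecidableRel H.Adj] (c : H.Coloring (Fin 2))
    (A B : Finset (Fin n)) (hA : ∀ v ∈ A, c v = 0) (hB : ∀ v ∈ B, c v ≠ 0) :
    ∑ a ∈ A, (B.filter (fun b => H.Adj a b)).card ≤ H.edgeFinset.card := by
  classical
  rw [← Finset.card_sigma]
  apply Finset.card_le_card_of_injOn (fun q => s(q.1, q.2))
  · rintro ⟨a, b⟩ hq
    simp only [Finset.mem_coe, Finset.mem_sigma, Finset.mem_filter] at hq
    simpa [SimpleGraph.mem_edgeFinset] using hq.2.2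
  · rintro ⟨a, b⟩ hq ⟨a', b'⟩ hq' heq
    simp only [Finset.coe_sigma, Set.mem_sigma_iff, Finset.mem_coe, Finset.mem_filter] at hq hq'
    simp only [Sym2.eq_iff] at heq
    rcases heq with ⟨rfl, rfl⟩ | ⟨rfl, rfl⟩
    · rfl
    · exact absurd (hA _ hq.1) (hB _ hq'.2.1)

lemma split_sum {V : Type*} [Fintype V] [DecidableEq V] (A : Finset V) (F : Finset V → ℝ) :
    ∑ U : Finset V, F U = ∑ S ∈ A.powerset, ∑ T ∈ Aᶜ.powerset, F (S ∪ T) := by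
  rw [← Finset.sum_product']
  apply Finset.sum_nbij' (i := fun U => (U ∩ A, U \ A)) (j := fun q => q.1 ∪ q.2)
  · intro U _
    simp only [Finset.mem_product, Finset.mem_powerset]
    constructor
    · exact Finset.inter_subset_right
    · intro v hv
      simp only [Finset.mem_sdiff] at hv
      simpa using hv.2
  · intro q _
    exact Finset.mem_univ _
  · intro U _
    simp only
    ext v
    simp only [Finset.mem_union, Finset.mem_inter, Finset.mem_sdiff]
    tauto
  · rintro ⟨S, T⟩ hq
    simp only [Finset.mem_product, Finset.mem_powerset] at hq
    obtain ⟨hS, hT⟩ := hq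
    simp only [Prod.mk.injEq]
    constructor
    · ext v
      simp only [Finset.mem_inter, Finset.mem_union]
      constructor
      · rintro ⟨hv | hv, hvA⟩
        · exact hv
        · exact absurd hvA (by simpa using hT hv)
      · intro hv; exact ⟨Or.inl hv, hS hv⟩
    · ext v
      simp only [Finset.mem_sdiff, Finset.mem_union]
      constructor
      · rintro ⟨hv | hv, hvA⟩
        · exact absurd (hS hv) hvA
        · exact hv
      · intro hv
        exact ⟨Or.inr hv, by simpa using hT hv⟩
  · intro U _
    congr 1
    ext v
    simp only [Finset.mem_union, Finset.mem_inter, Finset.mem_sdiff]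
    tauto

end Helpers

open Classical in
theorem stmt3 (n m : ℕ) (H : SimpleGraph (Fin n)) (hbip : H.Colorable 2)
    (hm : H.edgeSet.ncard = m) (p : ℝ) (hp0 : 0 < p) (hp1 : p ≤ 1) :
    ∑ U : Finset (Fin n), p ^ U.card * (1 - p) ^ (n - U.card) *
        Real.exp ((if (U.card : ℝ) ≤ 5 * p * n then (1 : ℝ) else 0) *
          (((H.edgeSet ∩ {e : Sym2 (Fin n) | ∀ v ∈ e, v ∈ U}).ncard : ℝ)) / (5 * p * n)) ≤
      Real.exp (p * m / n) := by
  classical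
  obtain rfl | hn := Nat.eq_zero_or_pos n
  · simp only [Nat.cast_zero, mul_zero, div_zero, Real.exp_zero, mul_one]
    have hU : ∀ U : Finset (Fin 0), U = (∅ : Finset (Fin 0)) := fun U =>
      Finset.eq_empty_of_isEmpty U
    calc ∑ U : Finset (Fin 0), p ^ U.card * (1 - p) ^ (0 - U.card)
        = ∑ _U : Finset (Fin 0), (1:ℝ) :=
          Finset.sum_congr rfl (fun U _ => by rw [hU U]; norm_num)
      _ ≤ 1 := by simp
  obtain ⟨c⟩ := hbip
  have hn0 : (0:ℝ) < (n:ℝ) := by exact_mod_cast hn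
  have h5 : (0:ℝ) < 5 * p * n := by positivity
  have hq : (0:ℝ) ≤ 1 - p := by linarith
  have hexp1 : (2.7 : ℝ) < Real.exp 1 := lt_trans (by norm_num) Real.exp_one_gt_d9
  have hexp2 : Real.exp 1 < 2.72 := lt_trans Real.exp_one_lt_d9 (by norm_num)
  set E : ℝ := Real.exp 1 - 1 with hEdef
  have hE0 : 0 ≤ E := by rw [hEdef]; linarith
  have hE2 : E ≤ 2 := by rw [hEdef]; linarith
  set A : Finset (Fin n) := Finset.univ.filter (fun v => c v = 0) with hAdef
  have hAmem : ∀ v ∈ A, c v = 0 := fun v hv => (Finset.mem_filter.mp hv).2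
  have hBmem : ∀ v ∈ Aᶜ, c v ≠ 0 := by
    intro v hv
    rw [Finset.mem_compl, hAdef, Finset.mem_filter] at hv
    simpa using hv
  -- notation
  set D : Fin n → Finset (Fin n) → ℕ := fun b S => (S.filter (H.Adj b)).card with hDdef
  set d : Fin n → ℕ := fun a => (Aᶜ.filter (fun b => H.Adj a b)).card with hddef
  have hdn : ∀ a : Fin n, (d a : ℝ) ≤ (n : ℝ) := by
    intro a
    have h1 : d a ≤ n := by
      rw [hddef]
      exact le_trans (Finset.card_filter_le _ _)
        (le_trans (Finset.card_le_univ _) (by simp))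
    exact_mod_cast h1
  have hmEnat : H.edgeFinset.card = m := by
    rw [← hm]; exact (Set.ncard_eq_toFinset_card' _).symm
  have hwnn : ∀ (k l : ℕ), 0 ≤ p ^ k * (1 - p) ^ l := fun k l =>
    mul_nonneg (pow_nonneg hp0.le _) (pow_nonneg hq _)
  -- X as finset card
  have hX : ∀ U : Finset (Fin n), (H.edgeSet ∩ {e : Sym2 (Fin n) | ∀ v ∈ e, v ∈ U}).ncard
      = (H.edgeFinset.filter (fun e => ∀ v ∈ e, v ∈ U)).card := by
    intro U
    rw [← Set.ncard_coe_finset]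
    congr 1
    ext e
    simp [SimpleGraph.mem_edgeFinset]
  calc ∑ U : Finset (Fin n), p ^ U.card * (1 - p) ^ (n - U.card) *
        Real.exp ((if (U.card : ℝ) ≤ 5 * p * n then (1 : ℝ) else 0) *
          (((H.edgeSet ∩ {e : Sym2 (Fin n) | ∀ v ∈ e, v ∈ U}).ncard : ℝ)) / (5 * p * n))
      = ∑ S ∈ A.powerset, ∑ T ∈ Aᶜ.powerset,
          (p ^ (S ∪ T).card * (1 - p) ^ (n - (S ∪ T).card) *
            Real.exp ((if ((S ∪ T).card : ℝ) ≤ 5 * p * n then (1 : ℝ) else 0) *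
              (((H.edgeSet ∩ {e : Sym2 (Fin n) | ∀ v ∈ e, v ∈ S ∪ T}).ncard : ℝ))
                / (5 * p * n))) := split_sum A _
    _ ≤ ∑ S ∈ A.powerset, ∑ T ∈ Aᶜ.powerset,
          (p ^ S.card * (1 - p) ^ (A.card - S.card) *
            (p ^ T.card * (1 - p) ^ (Aᶜ.card - T.card) *
              ∏ b ∈ T, Real.exp (min ((D b S : ℝ)) (5 * p * n) / (5 * p * n)))) := by
        apply Finset.sum_le_sum
        intro S hS
        apply Finset.sum_le_sum
        intro T hT
        rw [Finset.mem_powerset] at hS hT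
        have hdisj : Disjoint S T :=
          Finset.disjoint_of_subset_left hS (Finset.disjoint_of_subset_right hT
            (disjoint_compl_right))
        have hcard : (S ∪ T).card = S.card + T.card := Finset.card_union_of_disjoint hdisj
        have hsub : n - (S ∪ T).card = (A.card - S.card) + (Aᶜ.card - T.card) := by
          have h1 : S.card ≤ A.card := Finset.card_le_card hS
          have h2 : T.card ≤ Aᶜ.card := Finset.card_le_card hT
          have h3 : A.card + Aᶜ.card = n := by
            rw [Finset.card_add_card_compl]; simp
          omega
        have hweq : p ^ (S ∪ T).card * (1 - p) ^ (n - (S ∪ T).card)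
            = (p ^ S.card * (1 - p) ^ (A.card - S.card)) *
              (p ^ T.card * (1 - p) ^ (Aᶜ.card - T.card)) := by
          rw [hsub, hcard, pow_add, pow_add]; ring
        rw [hweq, mul_assoc]
        refine mul_le_mul_of_nonneg_left ?_ (mul_nonneg (pow_nonneg hp0.le _) (pow_nonneg hq _))
        refine mul_le_mul_of_nonneg_left ?_ (hwnn _ _)
        -- pointwise exponential bound
        rw [← Real.exp_sum]
        refine Real.exp_le_exp.mpr ?_
        by_cases hZ : (((S ∪ T).card : ℕ) : ℝ) ≤ 5 * p * n
        · rw [if_pos hZ, one_mul, ← Finset.sum_div]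
          gcongr
          have hmin : ∀ b ∈ T, min ((D b S : ℝ)) (5 * p * n) = (D b S : ℝ) := by
            intro b hb
            refine min_eq_left ?_
            refine le_trans ?_ hZ
            have : D b S ≤ (S ∪ T).card := le_trans (Finset.card_filter_le _ _)
              (Finset.card_le_card Finset.subset_union_left)
            exact_mod_cast this
          rw [Finset.sum_congr rfl hmin, hX]
          have hc1 := count1 H c S T (fun v hv => hAmem v (hS hv))
            (fun v hv => hBmem v (hT hv))
          calc ((H.edgeFinset.filter (fun e => ∀ v ∈ e, v ∈ S ∪ T)).card : ℝ)
              ≤ ((∑ b ∈ T, D b S : ℕ) : ℝ) := by exact_mod_cast hc1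
            _ = ∑ b ∈ T, (D b S : ℝ) := by push_cast; rfl
        · rw [if_neg hZ, zero_mul, zero_div]
          refine Finset.sum_nonneg fun b hb => div_nonneg (le_min (by positivity) h5.le) h5.le
    _ = ∑ S ∈ A.powerset, (p ^ S.card * (1 - p) ^ (A.card - S.card) *
          ∏ b ∈ Aᶜ, (1 - p + p * Real.exp (min ((D b S : ℝ)) (5 * p * n) / (5 * p * n)))) := by
        refine Finset.sum_congr rfl fun S hS => ?_
        rw [← Finset.mul_sum, expand_lemma]
    _ ≤ ∑ S ∈ A.powerset, (p ^ S.card * (1 - p) ^ (A.card - S.card) *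
          ∏ a ∈ S, Real.exp (p * E * (d a : ℝ) / (5 * p * n))) := by
        refine Finset.sum_le_sum fun S hS => ?_
        rw [Finset.mem_powerset] at hS
        refine mul_le_mul_of_nonneg_left ?_ (hwnn _ _)
        calc ∏ b ∈ Aᶜ, (1 - p + p * Real.exp (min ((D b S : ℝ)) (5 * p * n) / (5 * p * n)))
            ≤ ∏ b ∈ Aᶜ, Real.exp (p * E * (D b S : ℝ) / (5 * p * n)) := by
              refine Finset.prod_le_prod (fun b _ => ?_) (fun b _ => ?_)
              · exact add_nonneg hq (mul_nonneg hp0.le (Real.exp_pos _).le)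
              · set x : ℝ := min ((D b S : ℝ)) (5 * p * n) / (5 * p * n) with hxdef
                have hx0 : 0 ≤ x := div_nonneg (le_min (by positivity) h5.le) h5.le
                have hx1 : x ≤ 1 := by
                  rw [hxdef, div_le_one h5]; exact min_le_right _ _
                calc 1 - p + p * Real.exp x ≤ 1 - p + p * (1 + E * x) := by
                      have := exp_le_affine hx0 hx1
                      rw [← hEdef] at this
                      nlinarith
                  _ = p * E * x + 1 := by ring
                  _ ≤ Real.exp (p * E * x) := Real.add_one_le_exp _
                  _ ≤ Real.exp (p * E * (D b S : ℝ) / (5 * p * n)) := by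
                      refine Real.exp_le_exp.mpr ?_
                      rw [hxdef, mul_div_assoc]
                      refine mul_le_mul_of_nonneg_left ?_ (mul_nonneg hp0.le hE0)
                      gcongr
                      exact min_le_left _ _
          _ = Real.exp (∑ b ∈ Aᶜ, p * E * (D b S : ℝ) / (5 * p * n)) :=
              (Real.exp_sum _ _).symm
          _ = Real.exp (∑ a ∈ S, p * E * (d a : ℝ) / (5 * p * n)) := by
              congr 1
              have hnat := count2 H S Aᶜ
              calc ∑ b ∈ Aᶜ, p * E * (D b S : ℝ) / (5 * p * n)
                  = p * E * ((∑ b ∈ Aᶜ, D b S : ℕ) : ℝ) / (5 * p * n) := by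
                    push_cast
                    rw [Finset.mul_sum, Finset.sum_div]
                _ = p * E * ((∑ a ∈ S, d a : ℕ) : ℝ) / (5 * p * n) := by
                    rw [hDdef, hddef] at *
                    rw [hnat]
                _ = ∑ a ∈ S, p * E * (d a : ℝ) / (5 * p * n) := by
                    push_cast
                    rw [Finset.mul_sum, Finset.sum_div]
          _ = ∏ a ∈ S, Real.exp (p * E * (d a : ℝ) / (5 * p * n)) := Real.exp_sum _ _
    _ = ∏ a ∈ A, (1 - p + p * Real.exp (p * E * (d a : ℝ) / (5 * p * n))) := expand_lemma _ _ _
    _ ≤ Real.exp (p * m / n) := by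
        have hdm : ((∑ a ∈ A, d a : ℕ) : ℝ) ≤ (m : ℝ) := by
          have := count3 H c A Aᶜ hAmem hBmem
          rw [hmEnat] at this
          exact_mod_cast this
        calc ∏ a ∈ A, (1 - p + p * Real.exp (p * E * (d a : ℝ) / (5 * p * n)))
            ≤ ∏ a ∈ A, Real.exp (p * E * (p * E * (d a : ℝ) / (5 * p * n))) := by
              refine Finset.prod_le_prod (fun a _ => ?_) (fun a _ => ?_)
              · exact add_nonneg hq (mul_nonneg hp0.le (Real.exp_pos _).le)
              · set q : ℝ := p * E * (d a : ℝ) / (5 * p * n) with hqdef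
                have hq0 : 0 ≤ q := by positivity
                have hq1 : q ≤ 1 := by
                  rw [hqdef, div_le_one h5]
                  nlinarith [mul_le_mul_of_nonneg_left (hdn a) (mul_nonneg hp0.le hE0),
                    mul_le_mul_of_nonneg_right hE2 (mul_nonneg hp0.le hn0.le),
                    mul_pos hp0 hn0]
                calc 1 - p + p * Real.exp q ≤ 1 - p + p * (1 + E * q) := by
                      have := exp_le_affine hq0 hq1
                      rw [← hEdef] at this
                      nlinarith
                  _ = p * E * q + 1 := by ring
                  _ ≤ Real.exp (p * E * q) := Real.add_one_le_exp _
          _ = Real.exp (∑ a ∈ A, p * E * (p * E * (d a : ℝ) / (5 * p * n))) :=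
              (Real.exp_sum _ _).symm
          _ ≤ Real.exp (p * m / n) := by
              refine Real.exp_le_exp.mpr ?_
              have heq : ∑ a ∈ A, p * E * (p * E * (d a : ℝ) / (5 * p * n))
                  = p * E * (p * E * ((∑ a ∈ A, d a : ℕ) : ℝ) / (5 * p * n)) := by
                push_cast
                rw [Finset.mul_sum, Finset.sum_div, Finset.mul_sum]
              rw [heq]
              have hS0 : (0:ℝ) ≤ ((∑ a ∈ A, d a : ℕ) : ℝ) := Nat.cast_nonneg _
              have hEsq : E ^ 2 ≤ 5 := by nlinarith
              rw [show p * E * (p * E * ((∑ a ∈ A, d a : ℕ) : ℝ) / (5 * p * n))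
                  = (p * p * E ^ 2 * ((∑ a ∈ A, d a : ℕ) : ℝ)) / (5 * p * n) by ring]
              rw [div_le_div_iff₀ h5 hn0]
              have h2 : E ^ 2 * ((∑ a ∈ A, d a : ℕ) : ℝ) ≤ 5 * (m : ℝ) :=
                le_trans (mul_le_mul_of_nonneg_right hEsq hS0) (by linarith)
              nlinarith [mul_le_mul_of_nonneg_left h2
                (mul_nonneg (mul_nonneg hp0.le hp0.le) hn0.le)]
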